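/- If L is a semimodular lattice of finite length such that no two distinct comparable prime intervals of L belong to the same trajectory, then L is finite. -/

import Mathlib

/-- A lattice is (upper) semimodular if `a ⊓ b ⋖ b` implies `a ⋖ a ⊔ b`. -/
def Semimodular (α : Type*) [Lattice α] : Prop :=
  ∀ a b : α, a ⊓ b ⋖ b → a ⋖ a ⊔ b

/-- `{x, y, z, w}` is a covering square: a 4-element cover-preserving boolean sublattice,
with bottom `x`, middle elements `y ≠ z` (whose meet is `x` and join is `w`), and top `w`. -/
def IsCoveringSquare {α : Type*} [PartialOrder α] (x y z w : α) : Prop :=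
  y ≠ z ∧ IsGLB {y, z} x ∧ IsLUB {y, z} w ∧ x ⋖ y ∧ x ⋖ z ∧ y ⋖ w ∧ z ⋖ w

/-- Two (prime) intervals `[p.1, p.2]` and `[q.1, q.2]` are consecutive if
`{p.1, p.2, q.1, q.2}` is a covering square. -/
def Consecutive {α : Type*} [PartialOrder α] (p q : α × α) : Prop :=
  ∃ x y z w : α, IsCoveringSquare x y z w ∧
    ({p.1, p.2, q.1, q.2} : Set α) = {x, y, z, w}

/-- The prime intervals `[a, b]` (with `a ⋖ b`) of a poset. -/
abbrev PrimeInterval (α : Type*) [PartialOrder α] := {p : α × α // p.1 ⋖ p.2}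

/-- Two prime intervals belong to the same trajectory iff they are related by the
reflexive-transitive closure of the consecutiveness relation. -/
def SameTrajectory {α : Type*} [PartialOrder α] (p q : PrimeInterval α) : Prop :=
  Relation.ReflTransGen (fun a b : PrimeInterval α => Consecutive a.val b.val) p q

section Aux

variable {L : Type*} [Lattice L]

private lemma enat_le_of_lt_coe_succ {m : ℕ∞} {k : ℕ} (hm : m < (k : ℕ∞) + 1) : m ≤ (k : ℕ∞) :=
  (ENat.lt_add_one_iff (by simp)).mp hm

private lemma enat_toNat_le_of_le_coe {m : ℕ∞} {k : ℕ} (hm : m ≤ (k : ℕ∞)) : m.toNat ≤ k := by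
  lift m to ℕ using (hm.trans_lt (ENat.coe_lt_top k)).ne
  exact_mod_cast hm

lemma inf_eq_of_covBy {u a b : L} (ha : u ⋖ a) (hb : u ⋖ b) (hab : a ≠ b) : a ⊓ b = u := by
  rcases ha.eq_or_eq (le_inf ha.le hb.le) inf_le_left with h | h
  · exact h
  · exfalso
    have hle : a ≤ b := h ▸ inf_le_right
    rcases hb.eq_or_eq ha.le hle with h2 | h2
    · exact ha.lt.ne' h2
    · exact hab h2

lemma covBy_sup_left (hsm : Semimodular L) {u a b : L} (ha : u ⋖ a) (hb : u ⋖ b)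
    (hab : a ≠ b) : a ⋖ a ⊔ b :=
  hsm a b (by rw [inf_eq_of_covBy ha hb hab]; exact hb)

lemma mk_square (hsm : Semimodular L) {u a b : L} (ha : u ⋖ a) (hb : u ⋖ b) (hab : a ≠ b) :
    IsCoveringSquare u a b (a ⊔ b) := by
  refine ⟨hab, ?_, isLUB_pair, ha, hb, covBy_sup_left hsm ha hb hab, ?_⟩
  · rw [← inf_eq_of_covBy ha hb hab]; exact isGLB_pair
  · have := covBy_sup_left hsm hb ha hab.symm
    rwa [sup_comm b a] at this

lemma three_covers_false (hsm : Semimodular L)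
    (h : ∀ p q : PrimeInterval L, p ≠ q →
      (p.val.2 ≤ q.val.1 ∨ q.val.2 ≤ p.val.1) → ¬ SameTrajectory p q)
    {u a b c t : L} (ha : u ⋖ a) (hb : u ⋖ b) (hc : u ⋖ c)
    (hab : a ≠ b) (hac : a ≠ c) (hbc : b ≠ c)
    (tab : a ⊔ b = t) (tac : a ⊔ c = t) (tbc : b ⊔ c = t) : False := by
  have sq1 : IsCoveringSquare u a b t := tab ▸ mk_square hsm ha hb hab
  have sq2 : IsCoveringSquare u b c t := tbc ▸ mk_square hsm hb hc hbc
  have sq3 : IsCoveringSquare u a c t := tac ▸ mk_square hsm ha hc hac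
  have hbt : b ⋖ t := sq1.2.2.2.2.2.2
  have hat : a ⋖ t := sq3.2.2.2.2.2.1
  let p : PrimeInterval L := ⟨(u, a), ha⟩
  let q : PrimeInterval L := ⟨(a, t), hat⟩
  have s1 : Consecutive ((u, a) : L × L) (b, t) := ⟨u, a, b, t, sq1, rfl⟩
  have s2 : Consecutive ((b, t) : L × L) (u, c) :=
    ⟨u, b, c, t, sq2, by
      ext z
      simp only [Set.mem_insert_iff, Set.mem_singleton_iff]
      tauto⟩
  have s3 : Consecutive ((u, c) : L × L) (a, t) :=
    ⟨u, a, c, t, sq3, by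
      ext z
      simp only [Set.mem_insert_iff, Set.mem_singleton_iff]
      tauto⟩
  have traj : SameTrajectory p q := by
    refine Relation.ReflTransGen.tail (b := ⟨(u, c), hc⟩) ?_ s3
    refine Relation.ReflTransGen.tail (b := ⟨(b, t), hbt⟩) ?_ s2
    exact Relation.ReflTransGen.single s1
  have hne : p ≠ q := by
    intro e
    have : u = a := congrArg (fun r : PrimeInterval L => r.val.1) e
    exact ha.lt.ne this
  exact h p q hne (Or.inl le_rfl) traj

lemma covers_finite (hsm : Semimodular L)
    (h : ∀ p q : PrimeInterval L, p ≠ q →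
      (p.val.2 ≤ q.val.1 ∨ q.val.2 ≤ p.val.1) → ¬ SameTrajectory p q)
    (n : ℕ) : ∀ u : L, Order.coheight u ≤ (n : ℕ∞) → {a : L | u ⋖ a}.Finite := by
  induction n with
  | zero =>
    intro u hu
    have hmax : IsMax u := Order.coheight_eq_zero.mp (le_antisymm (by exact_mod_cast hu) (zero_le))
    convert Set.finite_empty
    ext a
    simp only [Set.mem_setOf_eq, Set.mem_empty_iff_false, iff_false]
    exact fun hc => hc.lt.not_ge (hmax hc.lt.le)
  | succ n ih =>
    intro u hu
    have hu' : Order.coheight u ≤ (n : ℕ∞) + 1 := by exact_mod_cast hu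
    by_contra hinf'
    have hS : {a : L | u ⋖ a}.Infinite := hinf'
    obtain ⟨a1, ha1⟩ := hS.nonempty
    have hS' : ({a : L | u ⋖ a} \ {a1}).Infinite := hS.diff (Set.finite_singleton a1)
    have hco : ∀ a : L, u ⋖ a → Order.coheight a ≤ (n : ℕ∞) := by
      intro a hc
      have h1 : Order.coheight a ≤ Order.coheight u := Order.coheight_anti hc.le
      have hfin : Order.coheight a < ⊤ :=
        lt_of_le_of_lt (h1.trans hu') (by exact_mod_cast ENat.coe_lt_top (n + 1))
      have h2 : Order.coheight a < Order.coheight u := Order.coheight_strictAnti hc.lt hfin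
      exact enat_le_of_lt_coe_succ (lt_of_lt_of_le h2 hu')
    have hfa1 : {b : L | a1 ⋖ b}.Finite := ih a1 (hco a1 ha1)
    have hmaps : Set.MapsTo (fun a => a1 ⊔ a) ({a : L | u ⋖ a} \ {a1}) {b : L | a1 ⋖ b} := by
      rintro a ⟨haS, hane⟩
      exact covBy_sup_left hsm ha1 haS (fun e => hane (by simp [← e]))
    obtain ⟨ai, hai, aj, haj, hneij, heq⟩ := hS'.exists_ne_map_eq_of_mapsTo hmaps hfa1
    have hai1 : a1 ≠ ai := fun e => hai.2 (by simp [← e])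
    have haj1 : a1 ≠ aj := fun e => haj.2 (by simp [← e])
    have h1i : ai ⋖ a1 ⊔ ai := by
      have := covBy_sup_left hsm hai.1 ha1 hai1.symm
      rwa [sup_comm ai a1] at this
    have hlt : ai < ai ⊔ aj := by
      rcases (le_sup_left : ai ≤ ai ⊔ aj).lt_or_eq with hlt | heq2
      · exact hlt
      · exfalso
        have hle : aj ≤ ai := by rw [heq2]; exact le_sup_right
        rcases hai.1.eq_or_eq haj.1.lt.le hle with h2 | h2
        · exact haj.1.lt.ne' h2
        · exact hneij h2.symm
    have hle2 : ai ⊔ aj ≤ a1 ⊔ ai := by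
      refine sup_le le_sup_right ?_
      rw [show a1 ⊔ ai = a1 ⊔ aj from heq]; exact le_sup_right
    have hij : ai ⊔ aj = a1 ⊔ ai := by
      rcases h1i.eq_or_eq hlt.le hle2 with h2 | h2
      · exact absurd h2 hlt.ne'
      · exact h2
    exact three_covers_false hsm h ha1 hai.1 haj.1 hai1 haj1 hneij rfl (by simpa using heq.symm) hij

lemma levels_finite (hcov : ∀ u : L, {a : L | u ⋖ a}.Finite) :
    ∀ k : ℕ, {x : L | Order.height x ≤ (k : ℕ∞)}.Finite := by
  intro k
  induction k with
  | zero =>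
    apply Set.Subsingleton.finite
    intro x hx y hy
    have hx' : IsMin x := Order.height_eq_zero.mp (le_antisymm (by exact_mod_cast hx) (zero_le))
    have hy' : IsMin y := Order.height_eq_zero.mp (le_antisymm (by exact_mod_cast hy) (zero_le))
    exact le_antisymm (le_trans (hx' inf_le_left) inf_le_right)
      (le_trans (hy' inf_le_right) inf_le_left)
  | succ k ih =>
    have hsub : {x : L | Order.height x ≤ ((k + 1 : ℕ) : ℕ∞)} ⊆
        {x : L | Order.height x ≤ (k : ℕ∞)} ∪
        ⋃ y ∈ {x : L | Order.height x ≤ (k : ℕ∞)}, {a : L | y ⋖ a} := by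
      intro x hx
      simp only [Set.mem_setOf_eq] at hx
      have hx' : Order.height x ≤ (k : ℕ∞) + 1 := by exact_mod_cast hx
      by_cases hxk : Order.height x ≤ (k : ℕ∞)
      · exact Or.inl hxk
      · right
        have hfin : Order.height x < ⊤ :=
          lt_of_le_of_lt hx (by exact_mod_cast ENat.coe_lt_top (k + 1))
      -- every element strictly below x has height ≤ k
        have hbelow : ∀ z : L, z < x → Order.height z ≤ (k : ℕ∞) := by
          intro z hz
          have hzfin : Order.height z < ⊤ := lt_of_le_of_lt (Order.height_mono hz.le) hfin
          have := Order.height_strictMono hz hzfin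
          exact enat_le_of_lt_coe_succ (lt_of_lt_of_le this hx')
        have hne0 : ¬ IsMin x := by
          intro hmin
          exact hxk (by simp [Order.height_eq_zero.mpr hmin])
        obtain ⟨y0, hy0⟩ := not_isMin_iff.mp hne0
        set S : Set ℕ := (fun y => (Order.height y).toNat) '' {y : L | y < x} with hSdef
        have hSne : S.Nonempty := ⟨_, ⟨y0, hy0, rfl⟩⟩
        have hSbdd : BddAbove S := by
          refine ⟨k, ?_⟩
          rintro m ⟨z, hz, rfl⟩
          exact enat_toNat_le_of_le_coe (hbelow z hz)
        obtain ⟨y, hyx, hySup⟩ := Nat.sSup_mem hSne hSbdd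
        have hcov' : y ⋖ x := by
          refine ⟨hyx, fun c hyc hcx => ?_⟩
          have hcfin : Order.height c < ⊤ := lt_of_le_of_lt (Order.height_mono hcx.le) hfin
          have hyfin : Order.height y < ⊤ := lt_of_le_of_lt (Order.height_mono hyc.le) hcfin
          have h1 : Order.height y < Order.height c :=
            Order.height_strictMono hyc hyfin
          have h2 : (Order.height y).toNat < (Order.height c).toNat := by
            lift Order.height c to ℕ using hcfin.ne with hc
            lift Order.height y to ℕ using hyfin.ne with hy
            exact_mod_cast h1
          have h3 : (Order.height c).toNat ≤ sSup S := le_csSup hSbdd ⟨c, hcx, rfl⟩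
          have hySup' : (Order.height y).toNat = sSup S := hySup
          omega
        exact Set.mem_biUnion (hbelow y hyx) hcov'
    exact (Set.Finite.union ih (ih.biUnion (fun y _ => hcov y))).subset hsub

end Aux

/-- If `L` is a semimodular lattice of finite length such that no two
distinct comparable prime intervals of `L` belong to the same trajectory, then `L` is
finite. -/
theorem statement12 (L : Type*) [Lattice L] (hsm : Semimodular L)
    (hfl : Order.krullDim L ≠ ⊤)
    (h : ∀ p q : PrimeInterval L, p ≠ q →
      (p.val.2 ≤ q.val.1 ∨ q.val.2 ≤ p.val.1) → ¬ SameTrajectory p q) :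
    Finite L := by
  cases isEmpty_or_nonempty L with
  | inl he => exact Finite.of_subsingleton
  | inr hne =>
    have hbot : Order.krullDim L ≠ ⊥ := by
      intro e
      have := Order.krullDim_nonneg (α := L)
      rw [e] at this
      simp at this
    obtain ⟨d, hd⟩ := WithBot.ne_bot_iff_exists.mp hbot
    have hdne : d ≠ ⊤ := by
      intro e
      apply hfl
      rw [← hd, e]
      rfl
    lift d to ℕ using hdne with N
    have hheight : ∀ x : L, Order.height x ≤ (N : ℕ∞) := by
      intro x
      have := Order.height_le_krullDim x
      rw [← hd] at this
      exact_mod_cast this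
    have hcoheight : ∀ x : L, Order.coheight x ≤ (N : ℕ∞) := by
      intro x
      have := Order.coheight_le_krullDim x
      rw [← hd] at this
      exact_mod_cast this
    have hcov : ∀ u : L, {a : L | u ⋖ a}.Finite :=
      fun u => covers_finite hsm h N u (hcoheight u)
    have huniv : (Set.univ : Set L).Finite :=
      (levels_finite hcov N).subset (fun x _ => hheight x)
    exact Set.finite_univ_iff.mp huniv
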